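/- Let Y_1, …, Y_m be real random variables on a common probability space, not necessarily independent, such that each Y_i is centered Gaussian, and suppose E[ Σ_{i ∈ [m]} Y_i² ] = 1. Then P[ Σ_{i ∈ [m]} Y_i² ≥ 1/2 ] ≥ 1/12. -/

import Mathlib

open MeasureTheory ProbabilityTheory

open Real Set

lemma integral_even_pow_mul_exp_neg_mul_sq {b : ℝ} (hb : 0 < b) (n : ℕ) :
    ∫ x : ℝ, x ^ (2 * n) * Real.exp (-b * x ^ 2)
      = b ^ (-(2 * (n:ℝ) + 1) / 2) * Real.Gamma ((2 * (n:ℝ) + 1) / 2) := by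
  have h1 : ∫ x : ℝ, x ^ (2*n) * Real.exp (-b * x ^ 2)
      = 2 * ∫ x in Ioi (0:ℝ), x ^ (2*n) * Real.exp (-b * x ^ 2) := by
    rw [← integral_comp_abs (f := fun x => x ^ (2*n) * Real.exp (-b * x ^ 2))]
    congr 1 with x
    simp [pow_mul, sq_abs]
  rw [h1]
  have h2 : ∫ x in Ioi (0:ℝ), x ^ (2*n) * Real.exp (-b * x ^ 2)
      = ∫ x in Ioi (0:ℝ), x ^ ((2*n : ℕ) : ℝ) * Real.exp (-b * x ^ (2:ℝ)) := by
    refine setIntegral_congr_fun measurableSet_Ioi (fun x hx => ?_)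
    rw [Real.rpow_natCast, Real.rpow_two]
  rw [h2, integral_rpow_mul_exp_neg_mul_rpow two_pos (by have := Nat.cast_nonneg (α := ℝ) (2*n); push_cast at this ⊢; linarith) hb]
  push_cast
  ring

open ProbabilityTheory

lemma gaussianReal_integral_eq {v : NNReal} (hv : v ≠ 0) (g : ℝ → ℝ) :
    ∫ x, g x ∂(gaussianReal 0 v) = ∫ x, gaussianPDFReal 0 v x * g x := by
  rw [gaussianReal_of_var_ne_zero 0 hv, gaussianPDF_def]
  simp only [ENNReal.ofReal]
  rw [integral_withDensity_eq_integral_smul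
      ((measurable_gaussianPDFReal 0 v).real_toNNReal) g]
  congr 1 with x
  rw [NNReal.smul_def, smul_eq_mul, Real.coe_toNNReal _ (gaussianPDFReal_nonneg 0 v x)]

lemma gaussianReal_integrable_iff {v : NNReal} (hv : v ≠ 0) (g : ℝ → ℝ) :
    Integrable g (gaussianReal 0 v) ↔
      Integrable (fun x => gaussianPDFReal 0 v x * g x) volume := by
  rw [gaussianReal_of_var_ne_zero 0 hv, gaussianPDF_def]
  simp only [ENNReal.ofReal]
  rw [integrable_withDensity_iff_integrable_smul
      ((measurable_gaussianPDFReal 0 v).real_toNNReal)]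
  refine integrable_congr (Filter.Eventually.of_forall fun x => ?_)
  simp only [NNReal.smul_def, smul_eq_mul, Real.coe_toNNReal _ (gaussianPDFReal_nonneg 0 v x)]

lemma gaussianPDFReal_eq {v : NNReal} (x : ℝ) :
    gaussianPDFReal 0 v x = (√(2*π*(v:ℝ)))⁻¹ * Real.exp (-((2*(v:ℝ))⁻¹) * x^2) := by
  rw [gaussianPDFReal]
  congr 1
  rw [sub_zero]
  congr 1
  rw [div_eq_inv_mul]
  ring

lemma gaussian_moments (v : NNReal) :
    Integrable (fun x : ℝ => x^2) (gaussianReal 0 v) ∧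
    Integrable (fun x : ℝ => x^4) (gaussianReal 0 v) ∧
    ∫ x, x^4 ∂(gaussianReal 0 v) = 3 * (∫ x, x^2 ∂(gaussianReal 0 v))^2 := by
  have hdirac : ∀ n : ℕ, Integrable (fun x : ℝ => x ^ n) (Measure.dirac (0:ℝ)) := by
    intro n
    refine ⟨(measurable_id.pow_const n).aestronglyMeasurable, ?_⟩
    simp [HasFiniteIntegral, lintegral_dirac]
  by_cases hv : v = 0
  · subst hv
    rw [gaussianReal_zero_var]
    exact ⟨hdirac 2, hdirac 4, by simp [integral_dirac]⟩
  · have hvpos : (0:ℝ) < v := lt_of_le_of_ne v.coe_nonneg (by exact_mod_cast (Ne.symm hv))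
    set b : ℝ := (2*(v:ℝ))⁻¹ with hbdef
    set C : ℝ := (√(2*π*(v:ℝ)))⁻¹ with hCdef
    have hb : 0 < b := by positivity
    have hpdf : ∀ x : ℝ, gaussianPDFReal 0 v x = C * Real.exp (-b * x^2) :=
      fun x => gaussianPDFReal_eq x
    have hint : ∀ n : ℕ, Integrable (fun x : ℝ => x ^ n * Real.exp (-b * x^2)) volume := by
      intro n
      have h := integrable_rpow_mul_exp_neg_mul_sq hb
        (s := (n:ℝ)) (lt_of_lt_of_le neg_one_lt_zero (Nat.cast_nonneg n))
      refine h.congr (Filter.Eventually.of_forall fun x => ?_)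
      simp [Real.rpow_natCast]
    have hintg : ∀ n : ℕ, Integrable (fun x : ℝ => x ^ n) (gaussianReal 0 v) := by
      intro n
      rw [gaussianReal_integrable_iff hv]
      refine (((hint n).const_mul C).congr (Filter.Eventually.of_forall fun x => ?_))
      dsimp only
      rw [hpdf x]; ring
    have hval : ∀ n : ℕ, ∫ x, x ^ (2*n) ∂(gaussianReal 0 v)
        = C * (b ^ (-(2*(n:ℝ)+1)/2) * Real.Gamma ((2*(n:ℝ)+1)/2)) := by
      intro n
      rw [gaussianReal_integral_eq hv]
      have heq : ∀ x : ℝ, gaussianPDFReal 0 v x * x ^ (2*n)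
          = C * (x ^ (2*n) * Real.exp (-b * x^2)) := by
        intro x; rw [hpdf x]; ring
      rw [integral_congr_ae (Filter.Eventually.of_forall heq), integral_const_mul,
        integral_even_pow_mul_exp_neg_mul_sq hb n]
    have hG1 : Real.Gamma ((1:ℝ)/2) = √π := Real.Gamma_one_half_eq
    have hG3 : Real.Gamma ((3:ℝ)/2) = (1/2) * √π := by
      rw [show (3:ℝ)/2 = 1/2 + 1 by norm_num, Real.Gamma_add_one (by norm_num), hG1]
    have hG5 : Real.Gamma ((5:ℝ)/2) = (3/4) * √π := by
      rw [show (5:ℝ)/2 = 3/2 + 1 by norm_num, Real.Gamma_add_one (by norm_num), hG3]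
      ring
    set u : ℝ := b ^ ((-1:ℝ)/2) with hudef
    have hb3 : b ^ ((-3:ℝ)/2) = u * b⁻¹ := by
      rw [hudef, ← Real.rpow_neg_one b, ← Real.rpow_add hb]
      norm_num
    have hb5 : b ^ ((-5:ℝ)/2) = u * b⁻¹ * b⁻¹ := by
      rw [hudef, ← Real.rpow_neg_one b, ← Real.rpow_add hb, ← Real.rpow_add hb]
      norm_num
    have h0 : C * (u * √π) = 1 := by
      have h := hval 0
      rw [show (2*((0:ℕ):ℝ)+1) = 1 by norm_num] at h
      rw [show (2*0 : ℕ) = 0 from rfl] at h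
      simp only [pow_zero] at h
      rw [integral_const] at h
      simp only [probReal_univ, smul_eq_mul, one_mul] at h
      rw [hG1] at h
      rw [show (-1:ℝ)/2 = -(1:ℝ)/2 by norm_num] at hudef
      rw [← hudef] at h
      linarith [h]
    have hE2 : ∫ x, x^2 ∂(gaussianReal 0 v) = C * (u * b⁻¹ * ((1/2) * √π)) := by
      have h := hval 1
      rw [show (2*((1:ℕ):ℝ)+1) = 3 by norm_num] at h
      rw [show (2*1 : ℕ) = 2 from rfl] at h
      rw [show -(3:ℝ)/2 = (-3:ℝ)/2 by norm_num, hb3, hG3] at h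
      rw [h]
    have hE4 : ∫ x, x^4 ∂(gaussianReal 0 v) = C * (u * b⁻¹ * b⁻¹ * ((3/4) * √π)) := by
      have h := hval 2
      rw [show (2*((2:ℕ):ℝ)+1) = 5 by norm_num] at h
      rw [show (2*2 : ℕ) = 4 from rfl] at h
      rw [show -(5:ℝ)/2 = (-5:ℝ)/2 by norm_num, hb5, hG5] at h
      rw [h]
    refine ⟨hintg 2, hintg 4, ?_⟩
    rw [hE2, hE4]
    linear_combination (-(3/4) * b⁻¹ * b⁻¹ * C * u * √π) * h0



/-- For (not necessarily independent) centered Gaussian random variables `Y_1, …, Y_m`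
with `E[Σ_i Y_i²] = 1`, we have `P[Σ_i Y_i² ≥ 1/2] ≥ 1/12`. -/
theorem gaussian_sum_squares_anticoncentration {Ω : Type*} [MeasurableSpace Ω]
    (μ : Measure Ω) [IsProbabilityMeasure μ]
    (m : ℕ) (Y : Fin m → Ω → ℝ)
    (hmeas : ∀ i, Measurable (Y i))
    (hlaw : ∀ i, ∃ v : NNReal, μ.map (Y i) = gaussianReal 0 v)
    (hE : (∫ ω, (∑ i : Fin m, Y i ω ^ 2) ∂μ) = 1) :
    (1 / 12 : ENNReal) ≤ μ {ω | 1 / 2 ≤ ∑ i : Fin m, Y i ω ^ 2} := by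
  classical
  choose v hv using hlaw
  set S : Ω → ℝ := fun ω => ∑ i : Fin m, Y i ω ^ 2 with hSdef
  have hSmeas : Measurable S :=
    Finset.measurable_sum _ (fun i _ => (hmeas i).pow_const 2)
  -- transfer integrability and moments from the Gaussian laws
  have h2 : ∀ i, Integrable (fun ω => Y i ω ^ 2) μ := by
    intro i
    have h := (gaussian_moments (v i)).1
    rw [← hv i] at h
    exact (integrable_map_measure h.1 (hmeas i).aemeasurable).mp h
  have h4 : ∀ i, Integrable (fun ω => Y i ω ^ 4) μ := by
    intro i
    have h := (gaussian_moments (v i)).2.1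
    rw [← hv i] at h
    exact (integrable_map_measure h.1 (hmeas i).aemeasurable).mp h
  set a : Fin m → ℝ := fun i => ∫ ω, Y i ω ^ 2 ∂μ with hadef
  have ha : ∀ i, 0 ≤ a i := fun i => integral_nonneg (fun ω => sq_nonneg _)
  have hmom : ∀ i, ∫ ω, Y i ω ^ 4 ∂μ = 3 * a i ^ 2 := by
    intro i
    have h := (gaussian_moments (v i)).2.2
    rw [← hv i] at h
    have e4 : ∫ x, x ^ 4 ∂(Measure.map (Y i) μ) = ∫ ω, Y i ω ^ 4 ∂μ :=
      integral_map (hmeas i).aemeasurable (by fun_prop)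
    have e2 : ∫ x, x ^ 2 ∂(Measure.map (Y i) μ) = ∫ ω, Y i ω ^ 2 ∂μ :=
      integral_map (hmeas i).aemeasurable (by fun_prop)
    rw [e4, e2] at h
    exact h
  have hsum : ∑ i : Fin m, a i = 1 := by
    rw [hadef, ← integral_finset_sum _ (fun i _ => h2 i), hE]
  -- L² membership
  have hL2 : ∀ i, MemLp (fun ω => Y i ω ^ 2) 2 μ := by
    intro i
    rw [memLp_two_iff_integrable_sq ((hmeas i).pow_const 2).aestronglyMeasurable]
    refine (h4 i).congr (Filter.Eventually.of_forall fun ω => ?_)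
    ring
  have hSL2 : MemLp S 2 μ := by
    have h := memLp_finsetSum' (μ := μ) (p := 2) Finset.univ (fun (i : Fin m) _ => hL2 i)
    have he : (∑ i : Fin m, fun ω => Y i ω ^ 2) = S := by
      funext ω
      rw [hSdef, Finset.sum_apply]
    rwa [he] at h
  have hSint : Integrable S μ := integrable_finset_sum _ (fun i _ => h2 i)
  have hS2int : Integrable (fun ω => S ω ^ 2) μ := hSL2.integrable_sq
  have hprod : ∀ i j, Integrable (fun ω => Y i ω ^ 2 * Y j ω ^ 2) μ := by
    intro i j
    have h := (((hL2 i).add (hL2 j)).integrable_sq.sub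
      (hL2 i).integrable_sq).sub (hL2 j).integrable_sq
    refine (h.const_mul (1/2)).congr (Filter.Eventually.of_forall fun ω => ?_)
    simp only [Pi.add_apply, Pi.sub_apply]
    ring
  -- Cauchy-Schwarz per pair
  have hconj : Real.HolderConjugate 2 2 := Real.HolderConjugate.two_two
  have hL2' : ∀ i, MemLp (fun ω => Y i ω ^ 2) (ENNReal.ofReal 2) μ := by
    intro i
    have : ENNReal.ofReal (2:ℝ) = 2 := by
      rw [show (2:ℝ) = ((2:ℕ):ℝ) by norm_num, ENNReal.ofReal_natCast]
      norm_num
    rw [this]; exact hL2 i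
  have hCS : ∀ i j, ∫ ω, Y i ω ^ 2 * Y j ω ^ 2 ∂μ ≤ 3 * a i * a j := by
    intro i j
    have h := integral_mul_le_Lp_mul_Lq_of_nonneg hconj
      (Filter.Eventually.of_forall fun ω => sq_nonneg (Y i ω))
      (Filter.Eventually.of_forall fun ω => sq_nonneg (Y j ω)) (hL2' i) (hL2' j)
    have e : ∀ k, (∫ ω, (Y k ω ^ 2) ^ (2:ℝ) ∂μ) = 3 * a k ^ 2 := by
      intro k
      rw [← hmom k]
      refine integral_congr_ae (Filter.Eventually.of_forall fun ω => ?_)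
      simp only [Real.rpow_two]; ring
    rw [e i, e j] at h
    have f : ∀ k, ((3:ℝ) * a k ^ 2) ^ ((1:ℝ)/2) = √3 * a k := by
      intro k
      rw [← Real.sqrt_eq_rpow, Real.sqrt_mul (by norm_num), Real.sqrt_sq (ha k)]
    rw [f i, f j] at h
    have h3 : √3 * √3 = 3 := Real.mul_self_sqrt (by norm_num)
    calc ∫ ω, Y i ω ^ 2 * Y j ω ^ 2 ∂μ ≤ √3 * a i * (√3 * a j) := h
      _ = 3 * a i * a j := by linear_combination a i * a j * h3
  -- second moment of S is at most 3
  have hS2le : ∫ ω, S ω ^ 2 ∂μ ≤ 3 := by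
    have hexp : ∀ ω, S ω ^ 2 = ∑ i : Fin m, ∑ j : Fin m, Y i ω ^ 2 * Y j ω ^ 2 := by
      intro ω
      rw [hSdef, sq, Finset.sum_mul_sum]
    calc ∫ ω, S ω ^ 2 ∂μ
        = ∑ i : Fin m, ∑ j : Fin m, ∫ ω, Y i ω ^ 2 * Y j ω ^ 2 ∂μ := by
          rw [integral_congr_ae (Filter.Eventually.of_forall hexp),
            integral_finset_sum _ (fun i _ => integrable_finset_sum _ (fun j _ => hprod i j))]
          exact Finset.sum_congr rfl fun i _ => integral_finset_sum _ (fun j _ => hprod i j)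
      _ ≤ ∑ i : Fin m, ∑ j : Fin m, 3 * a i * a j := by
          refine Finset.sum_le_sum fun i _ => Finset.sum_le_sum fun j _ => hCS i j
      _ = ∑ i : Fin m, (3 * a i * ∑ j : Fin m, a j) := by
          refine Finset.sum_congr rfl fun i _ => ?_
          rw [Finset.mul_sum]
      _ = 3 := by
          simp_rw [hsum]
          rw [← Finset.sum_mul, ← Finset.mul_sum, hsum]
          norm_num
  -- the event
  set A : Set Ω := {ω | 1/2 ≤ S ω} with hAdef
  have hA : MeasurableSet A := measurableSet_le measurable_const hSmeas
  set g : Ω → ℝ := A.indicator (fun _ => (1:ℝ)) with hgdef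
  have hgmem : MemLp g 2 μ := (memLp_const (1:ℝ)).indicator hA
  have hindint : Integrable (A.indicator S) μ := hSint.indicator hA
  have hptwise : ∀ ω, S ω ≤ 1/2 + A.indicator S ω := by
    intro ω
    by_cases hω : ω ∈ A
    · rw [Set.indicator_of_mem hω]
      linarith
    · rw [Set.indicator_of_notMem hω]
      have : ¬ (1/2 ≤ S ω) := hω
      linarith [not_le.mp this]
  have hhalf : (1:ℝ)/2 ≤ ∫ ω, A.indicator S ω ∂μ := by
    have h1 : ∫ ω, S ω ∂μ ≤ ∫ ω, (1/2 + A.indicator S ω) ∂μ :=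
      integral_mono hSint ((integrable_const (1/2:ℝ)).add hindint) hptwise
    rw [integral_add (integrable_const _) hindint, integral_const] at h1
    simp only [probReal_univ, smul_eq_mul, one_mul] at h1
    have hE' : ∫ ω, S ω ∂μ = 1 := hE
    linarith
  -- Hölder on the indicator
  have hg2 : MemLp g (ENNReal.ofReal 2) μ := by
    have : ENNReal.ofReal (2:ℝ) = 2 := by
      rw [show (2:ℝ) = ((2:ℕ):ℝ) by norm_num, ENNReal.ofReal_natCast]; norm_num
    rw [this]; exact hgmem
  have hS2' : MemLp S (ENNReal.ofReal 2) μ := by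
    have : ENNReal.ofReal (2:ℝ) = 2 := by
      rw [show (2:ℝ) = ((2:ℕ):ℝ) by norm_num, ENNReal.ofReal_natCast]; norm_num
    rw [this]; exact hSL2
  have hSnonneg : ∀ ω, 0 ≤ S ω := fun ω => Finset.sum_nonneg fun i _ => sq_nonneg _
  have hgnonneg : ∀ ω, 0 ≤ g ω := fun ω => Set.indicator_nonneg (fun _ _ => zero_le_one) ω
  have holder := integral_mul_le_Lp_mul_Lq_of_nonneg hconj
    (Filter.Eventually.of_forall hSnonneg) (Filter.Eventually.of_forall hgnonneg) hS2' hg2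
  set p : ℝ := (μ A).toReal with hpdef
  have hp0 : 0 ≤ p := ENNReal.toReal_nonneg
  have hSg : ∀ ω, S ω * g ω = A.indicator S ω := by
    intro ω
    by_cases hω : ω ∈ A
    · simp [hgdef, Set.indicator_of_mem hω]
    · simp [hgdef, Set.indicator_of_notMem hω]
  have hgsq : ∫ ω, g ω ^ (2:ℝ) ∂μ = p := by
    have : ∀ ω, g ω ^ (2:ℝ) = A.indicator (fun _ => (1:ℝ)) ω := by
      intro ω
      by_cases hω : ω ∈ A
      · simp [hgdef, Set.indicator_of_mem hω, Real.rpow_two]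
      · simp [hgdef, Set.indicator_of_notMem hω, Real.rpow_two]
    rw [integral_congr_ae (Filter.Eventually.of_forall this), integral_indicator_const _ hA]
    simp [hpdef, Measure.real]
  have hSsq : ∫ ω, S ω ^ (2:ℝ) ∂μ ≤ 3 := by
    refine le_trans (le_of_eq (integral_congr_ae (Filter.Eventually.of_forall fun ω => ?_))) hS2le
    simp only [Real.rpow_two]
  rw [integral_congr_ae (Filter.Eventually.of_forall hSg), hgsq] at holder
  -- combine
  have hS2nonneg : 0 ≤ ∫ ω, S ω ^ (2:ℝ) ∂μ :=
    integral_nonneg fun ω => Real.rpow_nonneg (hSnonneg ω) _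
  have hstep : (1:ℝ)/2 ≤ (3:ℝ) ^ ((1:ℝ)/2) * p ^ ((1:ℝ)/2) := by
    refine le_trans (le_trans hhalf holder) ?_
    have := Real.rpow_le_rpow hS2nonneg hSsq (by norm_num : (0:ℝ) ≤ 1/2)
    exact mul_le_mul_of_nonneg_right this (Real.rpow_nonneg hp0 _)
  have hfinal : (1:ℝ)/12 ≤ p := by
    have h3 : (3:ℝ) ^ ((1:ℝ)/2) = √3 := (Real.sqrt_eq_rpow 3).symm
    have hps : p ^ ((1:ℝ)/2) = √p := (Real.sqrt_eq_rpow p).symm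
    rw [h3, hps] at hstep
    have hsq3 : √3 * √3 = 3 := Real.mul_self_sqrt (by norm_num)
    have hsqp : √p * √p = p := Real.mul_self_sqrt hp0
    nlinarith [Real.sqrt_nonneg (3:ℝ), Real.sqrt_nonneg p]
  -- back to ENNReal
  have h1 : (1/12 : ENNReal) = ENNReal.ofReal (1/12) := by
    rw [ENNReal.ofReal_div_of_pos (by norm_num)]
    norm_num
  rw [h1, hAdef] at *
  calc ENNReal.ofReal (1/12) ≤ ENNReal.ofReal p := ENNReal.ofReal_le_ofReal hfinal
    _ = μ A := by rw [hpdef, ENNReal.ofReal_toReal (measure_ne_top μ A)]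
    _ = μ {ω | 1/2 ≤ S ω} := by rw [hAdef]
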